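/- Let Q : ℝ² → ℝ be a C² harmonic function of (s,t), i.e. ∂²Q/∂s² + ∂²Q/∂t² = 0 everywhere. Define x(s,t) = (s, ∂Q/∂t(s,t)), g(s,t) = (∂Q/∂s(s,t), −t), and f(s,t) = Q(s,t) − t ∂Q/∂t(s,t). Then for all (s,t) ∈ ℝ²: (i) ∂f/∂s = ⟨g, ∂x/∂s⟩ and ∂f/∂t = ⟨g, ∂x/∂t⟩ (Euclidean inner product on ℝ²); and (ii) the Jacobian determinants satisfy det D g(s,t) = det D x(s,t). (Consequently, wherever x is a local diffeomorphism, F = f ∘ x⁻¹ has gradient ∇F = g ∘ x⁻¹ and Hessian determinant det D²F = 1, i.e. it solves the convex Monge–Ampère equation.) -/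

import Mathlib

/-- Jacobian determinant of a map `ℝ² → ℝ²`. -/
noncomputable def jdet (F : ℝ × ℝ → ℝ × ℝ) (p : ℝ × ℝ) : ℝ :=
  (fderiv ℝ F p (1, 0)).1 * (fderiv ℝ F p (0, 1)).2 -
    (fderiv ℝ F p (1, 0)).2 * (fderiv ℝ F p (0, 1)).1

theorem stmt5 (Q : ℝ × ℝ → ℝ) (hQ : ContDiff ℝ 2 Q)
    (Qs Qt : ℝ × ℝ → ℝ)
    (hQs : ∀ p : ℝ × ℝ, Qs p = fderiv ℝ Q p (1, 0))
    (hQt : ∀ p : ℝ × ℝ, Qt p = fderiv ℝ Q p (0, 1))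
    (harm : ∀ p : ℝ × ℝ, fderiv ℝ Qs p (1, 0) + fderiv ℝ Qt p (0, 1) = 0)
    (x g : ℝ × ℝ → ℝ × ℝ) (f : ℝ × ℝ → ℝ)
    (hx : ∀ s t : ℝ, x (s, t) = (s, Qt (s, t)))
    (hg : ∀ s t : ℝ, g (s, t) = (Qs (s, t), -t))
    (hf : ∀ s t : ℝ, f (s, t) = Q (s, t) - t * Qt (s, t)) :
    ∀ s t : ℝ,
      fderiv ℝ f (s, t) (1, 0) =
        (g (s, t)).1 * (fderiv ℝ x (s, t) (1, 0)).1 +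
          (g (s, t)).2 * (fderiv ℝ x (s, t) (1, 0)).2 ∧
      fderiv ℝ f (s, t) (0, 1) =
        (g (s, t)).1 * (fderiv ℝ x (s, t) (0, 1)).1 +
          (g (s, t)).2 * (fderiv ℝ x (s, t) (0, 1)).2 ∧
      jdet g (s, t) = jdet x (s, t) := by
  -- functional forms
  have hQs' : Qs = fun p => (ContinuousLinearMap.apply ℝ ℝ ((1:ℝ), (0:ℝ))) (fderiv ℝ Q p) := by
    funext p; simp [hQs p]
  have hQt' : Qt = fun p => (ContinuousLinearMap.apply ℝ ℝ ((0:ℝ), (1:ℝ))) (fderiv ℝ Q p) := by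
    funext p; simp [hQt p]
  have hdQ : ContDiff ℝ 1 (fderiv ℝ Q) := hQ.fderiv_right (m := 1) (by norm_num)
  have hQsC : ContDiff ℝ 1 Qs := by
    rw [hQs']; exact (ContinuousLinearMap.apply ℝ ℝ ((1:ℝ), (0:ℝ))).contDiff.comp hdQ
  have hQtC : ContDiff ℝ 1 Qt := by
    rw [hQt']; exact (ContinuousLinearMap.apply ℝ ℝ ((0:ℝ), (1:ℝ))).contDiff.comp hdQ
  intro s t
  set p : ℝ × ℝ := (s, t) with hp
  have hQd : HasFDerivAt Q (fderiv ℝ Q p) p :=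
    (hQ.differentiable (by norm_num) p).hasFDerivAt
  have hQsd : HasFDerivAt Qs (fderiv ℝ Qs p) p :=
    (hQsC.differentiable (by norm_num) p).hasFDerivAt
  have hQtd : HasFDerivAt Qt (fderiv ℝ Qt p) p :=
    (hQtC.differentiable (by norm_num) p).hasFDerivAt
  -- derivative of x
  have hxeq : x = fun q : ℝ × ℝ => (q.1, Qt q) := by
    funext q; exact hx q.1 q.2
  have hxd : HasFDerivAt x ((ContinuousLinearMap.fst ℝ ℝ ℝ).prod (fderiv ℝ Qt p)) p := by
    rw [hxeq]; exact HasFDerivAt.prodMk (hasFDerivAt_fst) hQtd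
  have hxD := hxd.fderiv
  -- derivative of g
  have hgeq : g = fun q : ℝ × ℝ => (Qs q, -q.2) := by
    funext q; exact hg q.1 q.2
  have hgd : HasFDerivAt g ((fderiv ℝ Qs p).prod (-(ContinuousLinearMap.snd ℝ ℝ ℝ))) p := by
    rw [hgeq]; exact HasFDerivAt.prodMk hQsd (hasFDerivAt_snd.neg)
  have hgD := hgd.fderiv
  -- derivative of f
  have hfeq : f = fun q : ℝ × ℝ => Q q - q.2 * Qt q := by
    funext q; exact hf q.1 q.2
  have hmul : HasFDerivAt (fun q : ℝ × ℝ => q.2 * Qt q)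
      (p.2 • fderiv ℝ Qt p + Qt p • (ContinuousLinearMap.snd ℝ ℝ ℝ)) p :=
    (hasFDerivAt_snd).mul hQtd
  have hfd : HasFDerivAt f
      (fderiv ℝ Q p - (p.2 • fderiv ℝ Qt p + Qt p • (ContinuousLinearMap.snd ℝ ℝ ℝ))) p := by
    rw [hfeq]; exact hQd.sub hmul
  have hfD := hfd.fderiv
  have hQs1 : Qs p = fderiv ℝ Q p (1, 0) := hQs p
  have hQt1 : Qt p = fderiv ℝ Q p (0, 1) := hQt p
  have hh := harm p
  refine ⟨?_, ?_, ?_⟩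
  · rw [hfD, hg s t]
    simp only [hxD]
    simp [hQs1, hp]
    linarith [hQs (s, t)]
  · rw [hfD, hg s t]
    simp only [hxD]
    simp [hQt1, hp]
    linarith [hQt (s, t)]
  · simp only [jdet, hgD, hxD]
    simp
    linarith
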